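/- For any policy π : S' → Δ(A'), the Q-function Q^{Ξ(π)} of the projected policy in the absorbing-augmented MDP M' is a fixed point of the ζ-constrained Bellman evaluation operator T̃^π on S × A: for all (s,a) ∈ S × A, Q^{Ξ(π)}(s,a) = r(s,a) + γ E_{s'}[Σ_{a'∈A} π(a'|s') ζ(s',a') Q^{Ξ(π)}(s',a')]. -/
import Mathlib


open scoped BigOperators

/-- A finite Markov decision process with transition probabilities `P`,
reward function `r`, discount factor `γ`, and initial distribution `ρ`. -/
structure MDP (S A : Type) [Fintype S] [Fintype A] where
  P : S → A → S → ℝ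
  r : S → A → ℝ
  γ : ℝ
  ρ : S → ℝ

variable {S A : Type} [Fintype S] [Fintype A]

/-- `P` has nonnegative rows summing to one, `ρ` is a distribution, `0 ≤ γ < 1`. -/
def IsValidMDP (M : MDP S A) : Prop :=
  (∀ s a s', 0 ≤ M.P s a s') ∧ (∀ s a, ∑ s' : S, M.P s a s' = 1) ∧
  (∀ s, 0 ≤ M.ρ s) ∧ (∑ s : S, M.ρ s = 1) ∧ 0 ≤ M.γ ∧ M.γ < 1

/-- A (stationary, stochastic) policy. -/
def IsPolicy (π : S → A → ℝ) : Prop :=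
  (∀ s a, 0 ≤ π s a) ∧ ∀ s, ∑ a : A, π s a = 1

/-- Marginal state distribution at step `h` under policy `π`. -/
noncomputable def stateDist (M : MDP S A) (π : S → A → ℝ) : ℕ → S → ℝ
  | 0 => M.ρ
  | h + 1 => fun s' => ∑ s : S, ∑ a : A, stateDist M π h s * π s a * M.P s a s'

/-- Expected discounted return of `π` from the initial distribution. -/
noncomputable def value (M : MDP S A) (π : S → A → ℝ) : ℝ :=
  ∑' h : ℕ, M.γ ^ h * ∑ s : S, ∑ a : A, stateDist M π h s * π s a * M.r s a

/-- State-action distribution at step `h` under `π`, starting from `init`. -/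
noncomputable def saDist (M : MDP S A) (π : S → A → ℝ) (init : S × A → ℝ) :
    ℕ → S × A → ℝ
  | 0 => init
  | h + 1 => fun p => ∑ q : S × A, saDist M π init h q * M.P q.1 q.2 p.1 * π p.1 p.2

open Classical in
/-- Action-value function `Q^π(s,a)`: discounted sum of expected rewards when
starting from the state-action pair `(s, a)` and following `π` afterwards. -/
noncomputable def Qf (M : MDP S A) (π : S → A → ℝ) (s : S) (a : A) : ℝ :=
  ∑' h : ℕ, M.γ ^ h * ∑ p : S × A,
    saDist M π (fun q => if q = (s, a) then 1 else 0) h p * M.r p.1 p.2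

/-- State-value function `V^π(s)`. -/
noncomputable def Vf (M : MDP S A) (π : S → A → ℝ) (s : S) : ℝ :=
  ∑ a : A, π s a * Qf M π s a

/-- The absorbing-augmented MDP `M'`: the extra state `none = s_abs` and extra
action `none = a_abs` give zero reward and lead deterministically to `s_abs`. -/
noncomputable def absorb (M : MDP S A) : MDP (Option S) (Option A) where
  P := fun s a s' =>
    match s, a with
    | some s0, some a0 => (match s' with | some t => M.P s0 a0 t | none => 0)
    | _, _ => (match s' with | none => 1 | some _ => 0)
  r := fun s a =>
    match s, a with
    | some s0, some a0 => M.r s0 a0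
    | _, _ => 0
  γ := M.γ
  ρ := fun s => match s with | some s0 => M.ρ s0 | none => 0

/-- The ζ-constrained policy projection `Ξ`: it keeps the probability
`ζ(s,a)·π(a|s)` on supported actions `a ∈ A` and sends all remaining mass
to the absorbing action `a_abs = none`. -/
noncomputable def proj (ζ : Option S → Option A → ℝ) (π : Option S → Option A → ℝ) :
    Option S → Option A → ℝ :=
  fun s a =>
    match a with
    | some _ => ζ s a * π s a
    | none => ∑ a' : Option A, π s a' * (1 - ζ s a')

open Classical

noncomputable def delta (q : S × A) : S × A → ℝ := fun q' => if q' = q then 1 else 0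

noncomputable def g (M : MDP S A) (π : S → A → ℝ) (q : S × A) (h : ℕ) : ℝ :=
  ∑ p : S × A, saDist M π (delta q) h p * M.r p.1 p.2

lemma Qf_eq_tsum_g (M : MDP S A) (π : S → A → ℝ) (s : S) (a : A) :
    Qf M π s a = ∑' h : ℕ, M.γ ^ h * g M π (s, a) h := rfl

lemma saDist_nonneg (M : MDP S A) (hP0 : ∀ s a s', 0 ≤ M.P s a s')
    (π : S → A → ℝ) (hπ0 : ∀ s a, 0 ≤ π s a) (init : S × A → ℝ)
    (h0 : ∀ q, 0 ≤ init q) : ∀ h p, 0 ≤ saDist M π init h p := by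
  intro h
  induction h with
  | zero => exact h0
  | succ h ih =>
    intro p
    simp only [saDist]
    exact Finset.sum_nonneg fun q _ =>
      mul_nonneg (mul_nonneg (ih q) (hP0 _ _ _)) (hπ0 _ _)

lemma saDist_sum_one (M : MDP S A) (hP1 : ∀ s a, ∑ s' : S, M.P s a s' = 1)
    (π : S → A → ℝ) (hπ1 : ∀ s, ∑ a : A, π s a = 1) (init : S × A → ℝ)
    (h1 : ∑ q : S × A, init q = 1) : ∀ h, ∑ p : S × A, saDist M π init h p = 1 := by
  intro h
  induction h with
  | zero => exact h1
  | succ h ih =>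
    simp only [saDist]
    rw [Finset.sum_comm]
    have key : ∀ q : S × A, ∑ p : S × A, saDist M π init h q * M.P q.1 q.2 p.1 * π p.1 p.2
        = saDist M π init h q := by
      intro q
      rw [Fintype.sum_prod_type]
      have : ∀ s' : S, ∑ a' : A, saDist M π init h q * M.P q.1 q.2 s' * π s' a'
          = saDist M π init h q * M.P q.1 q.2 s' := by
        intro s'
        rw [← Finset.mul_sum, hπ1, mul_one]
      simp_rw [this, ← Finset.mul_sum, hP1, mul_one]
    simp_rw [key, ih]

lemma g_abs_le (M : MDP S A) (hP0 : ∀ s a s', 0 ≤ M.P s a s')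
    (hP1 : ∀ s a, ∑ s' : S, M.P s a s' = 1)
    (π : S → A → ℝ) (hπ : IsPolicy π) (q : S × A) (h : ℕ) :
    |g M π q h| ≤ ∑ p : S × A, |M.r p.1 p.2| := by
  have hd0 : ∀ p, 0 ≤ saDist M π (delta q) h p :=
    saDist_nonneg M hP0 π hπ.1 _ (fun q' => by unfold delta; positivity) h
  have hd1 : ∀ p, saDist M π (delta q) h p ≤ 1 := by
    intro p
    have := saDist_sum_one M hP1 π hπ.2 (delta q)
      (by simp [delta, Finset.sum_ite_eq']) h
    calc saDist M π (delta q) h p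
        ≤ ∑ p' : S × A, saDist M π (delta q) h p' :=
          Finset.single_le_sum (fun p' _ => hd0 p') (Finset.mem_univ p)
      _ = 1 := this
  calc |g M π q h| ≤ ∑ p : S × A, |saDist M π (delta q) h p * M.r p.1 p.2| :=
        Finset.abs_sum_le_sum_abs _ _
    _ ≤ ∑ p : S × A, |M.r p.1 p.2| := by
        apply Finset.sum_le_sum
        intro p _
        rw [abs_mul]
        calc |saDist M π (delta q) h p| * |M.r p.1 p.2|
            ≤ 1 * |M.r p.1 p.2| := by
              apply mul_le_mul_of_nonneg_right _ (abs_nonneg _)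
              rw [abs_of_nonneg (hd0 p)]; exact hd1 p
          _ = |M.r p.1 p.2| := one_mul _

lemma summable_g (M : MDP S A) (hP0 : ∀ s a s', 0 ≤ M.P s a s')
    (hP1 : ∀ s a, ∑ s' : S, M.P s a s' = 1) (hγ0 : 0 ≤ M.γ) (hγ1 : M.γ < 1)
    (π : S → A → ℝ) (hπ : IsPolicy π) (q : S × A) :
    Summable (fun h : ℕ => M.γ ^ h * g M π q h) := by
  apply Summable.of_abs
  refine Summable.of_nonneg_of_le (fun h => abs_nonneg _) ?_
    ((summable_geometric_of_lt_one hγ0 hγ1).mul_right (∑ p : S × A, |M.r p.1 p.2|))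
  intro h
  rw [abs_mul, abs_pow, abs_of_nonneg hγ0]
  exact mul_le_mul_of_nonneg_left (g_abs_le M hP0 hP1 π hπ q h) (by positivity)

lemma saDist_delta_succ (M : MDP S A) (π : S → A → ℝ) (s : S) (a : A) :
    ∀ (h : ℕ) (p : S × A), saDist M π (delta (s, a)) (h + 1) p
      = ∑ q : S × A, (M.P s a q.1 * π q.1 q.2) * saDist M π (delta q) h p := by
  intro h
  induction h with
  | zero =>
    intro p
    simp only [saDist, delta]
    rw [Finset.sum_eq_single (s, a)]
    · simp [Finset.sum_ite_eq']
    · intro q _ hq; simp [hq]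
    · simp
  | succ h ih =>
    intro p
    show (∑ x : S × A, saDist M π (delta (s,a)) (h+1) x * M.P x.1 x.2 p.1 * π p.1 p.2) = _
    simp_rw [ih, Finset.sum_mul]
    rw [Finset.sum_comm]
    apply Finset.sum_congr rfl
    intro q _
    show _ = M.P s a q.1 * π q.1 q.2 * saDist M π (delta q) (h+1) p
    simp only [saDist]
    rw [Finset.mul_sum]
    exact Finset.sum_congr rfl fun x _ => by ring

lemma g_succ (M : MDP S A) (π : S → A → ℝ) (s : S) (a : A) (h : ℕ) :
    g M π (s, a) (h + 1) = ∑ q : S × A, M.P s a q.1 * π q.1 q.2 * g M π q h := by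
  unfold g
  simp_rw [saDist_delta_succ M π s a h, Finset.sum_mul]
  rw [Finset.sum_comm]
  apply Finset.sum_congr rfl
  intro q _
  rw [Finset.mul_sum]
  exact Finset.sum_congr rfl fun p _ => by ring

lemma bellman (M : MDP S A) (hP0 : ∀ s a s', 0 ≤ M.P s a s')
    (hP1 : ∀ s a, ∑ s' : S, M.P s a s' = 1) (hγ0 : 0 ≤ M.γ) (hγ1 : M.γ < 1)
    (π : S → A → ℝ) (hπ : IsPolicy π) (s : S) (a : A) :
    Qf M π s a = M.r s a + M.γ * ∑ s' : S, M.P s a s' *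
      ∑ a' : A, π s' a' * Qf M π s' a' := by
  have hsum : ∀ q : S × A, Summable (fun h : ℕ => M.γ ^ h * g M π q h) :=
    summable_g M hP0 hP1 hγ0 hγ1 π hπ
  rw [Qf_eq_tsum_g, Summable.tsum_eq_zero_add (hsum (s, a))]
  have hg0 : g M π (s, a) 0 = M.r s a := by
    unfold g
    show ∑ p : S × A, delta (s, a) p * M.r p.1 p.2 = _
    rw [Finset.sum_eq_single (s, a)]
    · simp [delta]
    · intro q _ hq; simp [delta, hq]
    · simp
  rw [pow_zero, one_mul, hg0]
  congr 1
  have step : ∀ h : ℕ, M.γ ^ (h + 1) * g M π (s, a) (h + 1)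
      = ∑ q : S × A, M.P s a q.1 * π q.1 q.2 * (M.γ * (M.γ ^ h * g M π q h)) := by
    intro h
    rw [g_succ, Finset.mul_sum]
    apply Finset.sum_congr rfl
    intro q _
    ring
  simp_rw [step]
  rw [Summable.tsum_finsetSum (fun q _ => ((hsum q).mul_left _).mul_left _)]
  have : ∀ q : S × A, ∑' h : ℕ, M.P s a q.1 * π q.1 q.2 * (M.γ * (M.γ ^ h * g M π q h))
      = M.P s a q.1 * π q.1 q.2 * (M.γ * Qf M π q.1 q.2) := by
    intro q
    rw [tsum_mul_left, tsum_mul_left, Qf_eq_tsum_g]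
  simp_rw [this]
  rw [Fintype.sum_prod_type, Finset.mul_sum]
  apply Finset.sum_congr rfl
  intro s' _
  rw [Finset.mul_sum, Finset.mul_sum]
  apply Finset.sum_congr rfl
  intro a' _
  ring

/-- The Q-function of the projected policy `Ξ(π)` in the
absorbing-augmented MDP `M'` is a fixed point of the ζ-constrained Bellman
evaluation operator `T̃^π` on `S × A`. -/
theorem Qf_proj_fixed_point (M : MDP S A) (hM : IsValidMDP M)
    (ζ : Option S → Option A → ℝ)
    (hζ01 : ∀ s a, ζ s a = 0 ∨ ζ s a = 1)
    (hζa : ∀ s, ζ s none = 0) (hζs : ∀ a, ζ none a = 0)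
    (π : Option S → Option A → ℝ) (hπ : IsPolicy π) :
    ∀ (s : S) (a : A),
      Qf (absorb M) (proj ζ π) (some s) (some a) =
        M.r s a + M.γ * ∑ s' : S, M.P s a s' *
          ∑ a' : A, π (some s') (some a') * ζ (some s') (some a') *
            Qf (absorb M) (proj ζ π) (some s') (some a') := by
  obtain ⟨hP0, hP1, -, -, hγ0, hγ1⟩ := hM
  have hζ0 : ∀ s a, 0 ≤ ζ s a := fun s a => by
    rcases hζ01 s a with h | h <;> rw [h] <;> norm_num
  have hζ1 : ∀ s a, ζ s a ≤ 1 := fun s a => by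
    rcases hζ01 s a with h | h <;> rw [h] <;> norm_num
  have hP0' : ∀ s a s', 0 ≤ (absorb M).P s a s' := by
    rintro (_|s) (_|a) (_|s') <;> simp [absorb] <;> exact hP0 _ _ _
  have hP1' : ∀ s a, ∑ s' : Option S, (absorb M).P s a s' = 1 := by
    rintro (_|s) (_|a) <;>
      simp [absorb, Fintype.sum_option] <;> exact hP1 _ _
  have hΞnone : ∀ s, proj ζ π s none = ∑ a' : Option A, π s a' * (1 - ζ s a') :=
    fun s => rfl
  have hΞsome : ∀ s a, proj ζ π s (some a) = ζ s (some a) * π s (some a) :=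
    fun s a => rfl
  have hΞ : IsPolicy (proj ζ π) := by
    constructor
    · rintro s (_|a)
      · rw [hΞnone]
        exact Finset.sum_nonneg fun a' _ =>
          mul_nonneg (hπ.1 s a') (by linarith [hζ1 s a'])
      · rw [hΞsome]
        exact mul_nonneg (hζ0 _ _) (hπ.1 _ _)
    · intro s
      rw [Fintype.sum_option, hΞnone]
      have h1 : ∑ a' : Option A, π s a' * (1 - ζ s a')
          = 1 - ∑ a : A, π s (some a) * ζ s (some a) := by
        simp_rw [mul_sub, mul_one]
        rw [Finset.sum_sub_distrib, hπ.2, Fintype.sum_option, hζa s, mul_zero, zero_add]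
      rw [h1]
      simp_rw [hΞsome]
      have h2 : ∑ a : A, ζ s (some a) * π s (some a)
          = ∑ a : A, π s (some a) * ζ s (some a) :=
        Finset.sum_congr rfl fun a _ => mul_comm _ _
      rw [h2]; ring
  have hγ' : (absorb M).γ = M.γ := rfl
  have B := bellman (absorb M) hP0' hP1' (by rw [hγ']; exact hγ0) (by rw [hγ']; exact hγ1)
    (proj ζ π) hΞ
  set c : ℝ := ∑ a' : Option A, proj ζ π none a' * Qf (absorb M) (proj ζ π) none a'
    with hc
  have hQnone : ∀ a' : Option A, Qf (absorb M) (proj ζ π) none a' = M.γ * c := by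
    intro a'
    rw [B none a']
    have hr : (absorb M).r none a' = 0 := by cases a' <;> rfl
    rw [hr, hγ', Fintype.sum_option]
    have hPn : (absorb M).P none a' none = 1 := by cases a' <;> rfl
    have hPs : ∀ t : S, (absorb M).P none a' (some t) = 0 := by
      intro t; cases a' <;> rfl
    simp [hPn, hPs, ← hc]
  have hceq : c = M.γ * c := by
    conv_lhs => rw [hc]
    simp_rw [hQnone]
    rw [← Finset.sum_mul, hΞ.2 none, one_mul]
  have hc0 : c = 0 := by
    have h := hceq
    nlinarith [hceq]
  have hQabs : ∀ t : S, Qf (absorb M) (proj ζ π) (some t) none = 0 := by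
    intro t
    rw [B (some t) none]
    have hr : (absorb M).r (some t) none = 0 := rfl
    have hPn : (absorb M).P (some t) none none = 1 := rfl
    have hPs : ∀ u : S, (absorb M).P (some t) none (some u) = 0 := fun u => rfl
    rw [hr, hγ', Fintype.sum_option]
    simp [hPn, hPs, ← hc, hc0]
  intro s a
  rw [B (some s) (some a)]
  have hr : (absorb M).r (some s) (some a) = M.r s a := rfl
  have hPn : (absorb M).P (some s) (some a) none = 0 := rfl
  have hPs : ∀ u : S, (absorb M).P (some s) (some a) (some u) = M.P s a u :=
    fun u => rfl
  rw [hr, hγ', Fintype.sum_option, hPn, zero_mul, zero_add]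
  congr 1
  congr 1
  apply Finset.sum_congr rfl
  intro s' _
  rw [hPs, Fintype.sum_option, hQabs, mul_zero, zero_add]
  congr 1
  apply Finset.sum_congr rfl
  intro a' _
  rw [hΞsome]
  ring
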